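/- Let (ρ_n), (m_n) be sequences of measurable functions on the torus 𝕋^d and ρ, m measurable on 𝕋^d, with values ρ_n, ρ ∈ [0, R] for some R > 0, and suppose there is K > 0 with |m_n(x)| ≤ K ρ_n(x) and |m(x)| ≤ K ρ(x) for a.e. x. If ρ_n → ρ in L^1(𝕋^d) and m_n → m in L^1(𝕋^d), then the kinetic energy densities converge: 1_{ρ_n > 0} |m_n|²/ρ_n → 1_{ρ > 0} |m|²/ρ in L^1(𝕋^d). -/

import Mathlib

open MeasureTheory Filter
open scoped ENNReal Topology

lemma core_ineq {E : Type*} [NormedAddCommGroup E] [InnerProductSpace ℝ E]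
    (K : ℝ) (a b : ℝ) (p q : E) (ha : 0 < a) (hb : 0 < b)
    (hp : ‖p‖ ≤ K * a) :
    ‖p‖ ^ 2 / a - ‖q‖ ^ 2 / b ≤ K ^ 2 * |a - b| + 2 * K * ‖p - q‖ := by
  have h0 : (0:ℝ) ≤ ‖(b:ℝ) • p - a • q‖ ^ 2 := sq_nonneg _
  have hexp : ‖(b:ℝ) • p - a • q‖ ^ 2 =
      b^2 * ‖p‖^2 - 2 * (a*b) * inner ℝ p q + a^2 * ‖q‖^2 := by
    rw [norm_sub_sq_real]
    simp only [norm_smul, real_inner_smul_left, real_inner_smul_right,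
      Real.norm_eq_abs, abs_of_pos ha, abs_of_pos hb, mul_pow]
    ring
  rw [hexp] at h0
  have hCS : ‖p‖^2 - inner ℝ p q ≤ ‖p‖ * ‖p - q‖ := by
    have h := real_inner_le_norm p (p - q)
    have h1 : (inner ℝ p (p - q) : ℝ) = ‖p‖^2 - inner ℝ p q := by
      rw [inner_sub_right, real_inner_self_eq_norm_sq]
    linarith
  have habs2 : b - a ≤ |a - b| := by rw [abs_sub_comm]; exact le_abs_self _
  have hpq : (0:ℝ) ≤ ‖p - q‖ := norm_nonneg _
  have hpn : (0:ℝ) ≤ ‖p‖ := norm_nonneg _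
  have hp2 : ‖p‖^2 ≤ (K*a)^2 := pow_le_pow_left₀ hpn hp 2
  have hA : (b - a) * ‖p‖^2 ≤ |a - b| * (K*a)^2 :=
    le_trans (mul_le_mul_of_nonneg_right habs2 (sq_nonneg _))
      (mul_le_mul_of_nonneg_left hp2 (abs_nonneg _))
  have hB : ‖p‖^2 - inner ℝ p q ≤ (K*a) * ‖p - q‖ :=
    le_trans hCS (mul_le_mul_of_nonneg_right hp hpq)
  rw [div_sub_div _ _ ha.ne' hb.ne', div_le_iff₀ (by positivity)]
  have main : a * (‖p‖^2 * b - a * ‖q‖^2) ≤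
      a * ((K ^ 2 * |a - b| + 2 * K * ‖p - q‖) * (a * b)) := by
    nlinarith [mul_le_mul_of_nonneg_left hA hb.le, mul_le_mul_of_nonneg_left hB
      (mul_nonneg (mul_nonneg (by norm_num : (0:ℝ) ≤ 2) ha.le) hb.le)]
  exact (mul_le_mul_iff_right₀ ha).mp main

lemma key_ineq {E : Type*} [NormedAddCommGroup E] [InnerProductSpace ℝ E]
    (K : ℝ) (hK : 0 < K) (a b : ℝ) (p q : E) (ha : 0 ≤ a) (hb : 0 ≤ b)
    (hp : ‖p‖ ≤ K * a) (hq : ‖q‖ ≤ K * b) :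
    |(if 0 < a then ‖p‖ ^ 2 / a else 0) - (if 0 < b then ‖q‖ ^ 2 / b else 0)|
      ≤ K ^ 2 * |a - b| + 2 * K * ‖p - q‖ := by
  rcases lt_or_eq_of_le ha with ha' | ha' <;> rcases lt_or_eq_of_le hb with hb' | hb'
  · rw [if_pos ha', if_pos hb', abs_sub_le_iff]
    constructor
    · exact core_ineq K a b p q ha' hb' hp
    · have := core_ineq K b a q p hb' ha' hq
      rw [abs_sub_comm, norm_sub_rev] at this
      linarith
  · have hq0 : ‖q‖ = 0 := le_antisymm (by simpa [← hb'] using hq) (norm_nonneg _)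
    rw [if_pos ha', if_neg (by simp [← hb'])]
    have h1 : ‖p‖^2 / a ≤ K^2 * a := by
      rw [div_le_iff₀ ha']
      nlinarith [pow_le_pow_left₀ (norm_nonneg p) hp 2]
    have h2 : |a - b| = a := by rw [← hb']; simp [abs_of_pos ha']
    rw [sub_zero, abs_of_nonneg (by positivity)]
    have : (0:ℝ) ≤ 2 * K * ‖p - q‖ := by positivity
    nlinarith
  · have hp0 : ‖p‖ = 0 := le_antisymm (by simpa [← ha'] using hp) (norm_nonneg _)
    rw [if_pos hb', if_neg (by simp [← ha'])]
    have h1 : ‖q‖^2 / b ≤ K^2 * b := by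
      rw [div_le_iff₀ hb']
      nlinarith [pow_le_pow_left₀ (norm_nonneg q) hq 2]
    have h2 : |a - b| = b := by rw [← ha']; simp [abs_of_pos hb']
    rw [zero_sub, abs_neg, abs_of_nonneg (by positivity)]
    have : (0:ℝ) ≤ 2 * K * ‖p - q‖ := by positivity
    nlinarith
  · rw [if_neg (by simp [← ha']), if_neg (by simp [← hb'])]
    simp
    positivity

/-- Strong `L¹` continuity of the kinetic energy density: if `ρ_n → ρ` and
`m_n → m` in `L¹(𝕋^d)`, with `0 ≤ ρ_n, ρ ≤ R` and `|m_n| ≤ K ρ_n`, `|m| ≤ K ρ` a.e., then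
`1_{ρ_n > 0} |m_n|²/ρ_n → 1_{ρ > 0} |m|²/ρ` in `L¹(𝕋^d)`. -/
theorem kinetic_energy_density_L1_convergence
    {d : ℕ}
    (ρn : ℕ → (Fin d → AddCircle (1 : ℝ)) → ℝ)
    (mn : ℕ → (Fin d → AddCircle (1 : ℝ)) → EuclideanSpace ℝ (Fin d))
    (ρ : (Fin d → AddCircle (1 : ℝ)) → ℝ)
    (m : (Fin d → AddCircle (1 : ℝ)) → EuclideanSpace ℝ (Fin d))
    (hρnm : ∀ n, AEStronglyMeasurable (ρn n) volume)
    (hmnm : ∀ n, AEStronglyMeasurable (mn n) volume)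
    (hρm : AEStronglyMeasurable ρ volume) (hmm : AEStronglyMeasurable m volume)
    (R : ℝ) (hR : 0 < R)
    (hρnbd : ∀ n, ∀ᵐ x ∂volume, ρn n x ∈ Set.Icc 0 R)
    (hρbd : ∀ᵐ x ∂volume, ρ x ∈ Set.Icc 0 R)
    (K : ℝ) (hK : 0 < K)
    (hmnbd : ∀ n, ∀ᵐ x ∂volume, ‖mn n x‖ ≤ K * ρn n x)
    (hmbd : ∀ᵐ x ∂volume, ‖m x‖ ≤ K * ρ x)
    (hρconv : Tendsto (fun n => eLpNorm (fun x => ρn n x - ρ x) 1 volume) atTop (𝓝 0))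
    (hmconv : Tendsto (fun n => eLpNorm (fun x => mn n x - m x) 1 volume) atTop (𝓝 0)) :
    Tendsto (fun n => eLpNorm (fun x =>
        Set.indicator {y | 0 < ρn n y} (fun y => ‖mn n y‖ ^ 2 / ρn n y) x -
        Set.indicator {y | 0 < ρ y} (fun y => ‖m y‖ ^ 2 / ρ y) x) 1 volume)
      atTop (𝓝 0) := by
  set g1 : ℕ → _ → ℝ := fun n x => K ^ 2 * ‖ρn n x - ρ x‖ with hg1
  set g2 : ℕ → _ → ℝ := fun n x => 2 * K * ‖mn n x - m x‖ with hg2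
  have hg1m : ∀ n, AEStronglyMeasurable (g1 n) volume := fun n =>
    (((hρnm n).sub hρm).norm).const_mul _
  have hg2m : ∀ n, AEStronglyMeasurable (g2 n) volume := fun n =>
    (((hmnm n).sub hmm).norm).const_mul _
  -- step 1: a.e. pointwise bound
  have bound : ∀ n, eLpNorm (fun x =>
      Set.indicator {y | 0 < ρn n y} (fun y => ‖mn n y‖ ^ 2 / ρn n y) x -
      Set.indicator {y | 0 < ρ y} (fun y => ‖m y‖ ^ 2 / ρ y) x) 1 volume ≤
      ENNReal.ofReal (K ^ 2) * eLpNorm (fun x => ρn n x - ρ x) 1 volume +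
      ENNReal.ofReal (2 * K) * eLpNorm (fun x => mn n x - m x) 1 volume := by
    intro n
    have hmono : eLpNorm (fun x =>
        Set.indicator {y | 0 < ρn n y} (fun y => ‖mn n y‖ ^ 2 / ρn n y) x -
        Set.indicator {y | 0 < ρ y} (fun y => ‖m y‖ ^ 2 / ρ y) x) 1 volume ≤
        eLpNorm (fun x => g1 n x + g2 n x) 1 volume := by
      apply eLpNorm_mono_ae
      filter_upwards [hρnbd n, hρbd, hmnbd n, hmbd] with x h1 h2 h3 h4
      have key := key_ineq K hK (ρn n x) (ρ x) (mn n x) (m x) h1.1 h2.1 h3 h4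
      simp only [Set.indicator_apply, Set.mem_setOf_eq, Real.norm_eq_abs]
      have hgnn : 0 ≤ g1 n x + g2 n x := by
        simp only [hg1, hg2]; positivity
      rw [abs_of_nonneg hgnn]
      simpa [hg1, hg2, Real.norm_eq_abs] using key
    refine hmono.trans ?_
    refine (eLpNorm_add_le (hg1m n) (hg2m n) le_rfl).trans ?_
    gcongr
    · have he : eLpNorm (g1 n) 1 volume =
          ‖(K ^ 2 : ℝ)‖ₑ * eLpNorm (fun x => ρn n x - ρ x) 1 volume := by
        rw [show g1 n = (K ^ 2 : ℝ) • (fun x => ‖ρn n x - ρ x‖) from rfl,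
          eLpNorm_const_smul, eLpNorm_norm]
      rw [he, Real.enorm_eq_ofReal (by positivity)]
    · have he : eLpNorm (g2 n) 1 volume =
          ‖(2 * K : ℝ)‖ₑ * eLpNorm (fun x => mn n x - m x) 1 volume := by
        rw [show g2 n = (2 * K : ℝ) • (fun x => ‖mn n x - m x‖) from rfl,
          eLpNorm_const_smul, eLpNorm_norm]
      rw [he, Real.enorm_eq_ofReal (by positivity)]
  -- step 2: squeeze
  have hlim : Tendsto (fun n =>
      ENNReal.ofReal (K ^ 2) * eLpNorm (fun x => ρn n x - ρ x) 1 volume +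
      ENNReal.ofReal (2 * K) * eLpNorm (fun x => mn n x - m x) 1 volume) atTop (𝓝 0) := by
    have h1 := ENNReal.Tendsto.const_mul (a := ENNReal.ofReal (K ^ 2)) hρconv (Or.inr ENNReal.ofReal_ne_top)
    have h2 := ENNReal.Tendsto.const_mul (a := ENNReal.ofReal (2 * K)) hmconv (Or.inr ENNReal.ofReal_ne_top)
    simpa using h1.add h2
  exact tendsto_of_tendsto_of_tendsto_of_le_of_le tendsto_const_nhds hlim
    (fun n => zero_le) bound
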